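/- arXiv:1904.05930 — 3 statements merged into one kernel-verified Lean document; each statement's English description precedes it below -/
import Mathlib

section
/- Let c be an n×n real positive semidefinite symmetric matrix and b = (b_{ijk}) ∈ ℝ^{n³}. Then the linear system of n³ equations in unknowns (a_{ijk}): a_{ijk} + c_{jk}·∑_q a_{qiq} = b_{ijk} for all i,j,k ∈ {1,…,n}, viewed as a linear map L on ℝ^{n³}, has determinant det(L) = det(I_n + c); in particular L is invertible. -/
open Matrix

/-- Let `c` be an `n × n` real positive semidefinite symmetric matrix and
`b ∈ ℝ^{n³}`.  The linear system `a_{ijk} + c_{jk} ∑_q a_{qiq} = b_{ijk}`, viewed as a linear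
map `L` on `ℝ^{n³}`, satisfies `det L = det (Iₙ + c)`; in particular `L` is invertible. -/
theorem stmt_0 (n : ℕ) (c : Matrix (Fin n) (Fin n) ℝ)
    (hsymm : c.IsSymm) (hpsd : c.PosSemidef)
    (b : Fin n → Fin n → Fin n → ℝ)
    (L : (Fin n → Fin n → Fin n → ℝ) →ₗ[ℝ] (Fin n → Fin n → Fin n → ℝ))
    (hL : ∀ (a : Fin n → Fin n → Fin n → ℝ) (i j k : Fin n),
      L a i j k = a i j k + c j k * ∑ q, a q i q) :
    LinearMap.det L = (1 + c).det ∧ Function.Bijective L := by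
  classical
  -- linear equivalence between the nested function space and functions on the product type
  set ι := Fin n × Fin n × Fin n
  let e : (Fin n → Fin n → Fin n → ℝ) ≃ₗ[ℝ] (ι → ℝ) :=
    { toFun := fun a p => a p.1 p.2.1 p.2.2
      invFun := fun f i j k => f (i, j, k)
      map_add' := fun _ _ => rfl
      map_smul' := fun _ _ => rfl
      left_inv := fun a => rfl
      right_inv := fun f => rfl }
  -- the matrices A, B with A * B + 1 the matrix of L and B * A = c
  let A : Matrix ι (Fin n) ℝ := fun p m =>
    c p.2.1 p.2.2 * (if p.1 = m then 1 else 0)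
  let B : Matrix (Fin n) ι ℝ := fun m q =>
    (if q.2.1 = m then 1 else 0) * (if q.1 = q.2.2 then 1 else 0)
  have hBA : B * A = c := by
    ext m m'
    simp only [Matrix.mul_apply]
    simp only [B, A]
    rw [Fintype.sum_prod_type]
    simp [Fintype.sum_prod_type, Finset.mul_sum, mul_ite, ite_mul, Finset.sum_ite_eq,
      Finset.sum_ite_eq']
  have hconj : (e : (Fin n → Fin n → Fin n → ℝ) →ₗ[ℝ] (ι → ℝ)) ∘ₗ L ∘ₗ
      (e.symm : (ι → ℝ) →ₗ[ℝ] (Fin n → Fin n → Fin n → ℝ)) = Matrix.toLin' (A * B + 1) := by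
    apply LinearMap.ext
    intro f
    funext p
    obtain ⟨i, j, k⟩ := p
    simp only [LinearMap.comp_apply, LinearEquiv.coe_coe, Matrix.toLin'_apply,
      Matrix.add_mulVec, Matrix.one_mulVec, Pi.add_apply]
    show L (fun i j k => f (i, j, k)) i j k = ((A * B) *ᵥ f) (i, j, k) + f (i, j, k)
    rw [hL, add_comm]
    congr 1
    simp only [Matrix.mulVec, dotProduct, Matrix.mul_apply]
    simp only [A, B]
    rw [Fintype.sum_prod_type]
    simp only [Fintype.sum_prod_type, mul_ite, ite_mul, mul_one, mul_zero, zero_mul, one_mul,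
      Finset.sum_ite_eq, Finset.sum_ite_eq', Finset.mem_univ, if_true, Finset.sum_ite_irrel,
      Finset.sum_const_zero]
    rw [Finset.mul_sum]
  have hdet : LinearMap.det L = (1 + c).det := by
    rw [← LinearMap.det_conj L e, hconj, LinearMap.det_toLin', Matrix.det_mul_add_one_comm, hBA,
      add_comm]
  refine ⟨hdet, ?_⟩
  have hpos : (0 : ℝ) < (1 + c).det := by
    have h1 : (1 + c).PosDef := Matrix.PosDef.one.add_posSemidef hpsd
    exact h1.det_pos
  have hne : LinearMap.det L ≠ 0 := by rw [hdet]; exact ne_of_gt hpos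
  have : ⇑(L.equivOfDetNeZero hne) = ⇑L := by ext x; rfl
  exact this ▸ (L.equivOfDetNeZero hne).bijective
end

section
/- Let c be an n×n real positive semidefinite symmetric matrix and b ∈ ℝ^{n³}. Define h ∈ ℝ^n by h_i = ∑_q b_{qiq}. Then a_{ijk} := b_{ijk} − c_{jk}·[(I+c)^{-1} h]_i is the unique solution of the system a_{ijk} + c_{jk}·∑_q a_{qiq} = b_{ijk} for all i,j,k ∈ {1,…,n}. -/
open Matrix

/-- For `c` positive semidefinite symmetric and `b ∈ ℝ^{n³}`, setting
`h_i = ∑_q b_{qiq}`, the tensor `a_{ijk} = b_{ijk} − c_{jk}·[(I+c)⁻¹ h]_i` is the unique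
solution of the system `a_{ijk} + c_{jk} ∑_q a_{qiq} = b_{ijk}`. -/
theorem stmt_1 (n : ℕ) (c : Matrix (Fin n) (Fin n) ℝ)
    (hsymm : c.IsSymm) (hpsd : c.PosSemidef)
    (b : Fin n → Fin n → Fin n → ℝ)
    (h : Fin n → ℝ) (hh : ∀ i, h i = ∑ q, b q i q)
    (a : Fin n → Fin n → Fin n → ℝ)
    (ha : ∀ i j k, a i j k = b i j k - c j k * ((1 + c)⁻¹ *ᵥ h) i) :
    (∀ i j k, a i j k + c j k * ∑ q, a q i q = b i j k) ∧
    (∀ a' : Fin n → Fin n → Fin n → ℝ,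
      (∀ i j k, a' i j k + c j k * ∑ q, a' q i q = b i j k) → a' = a) := by
  have hpd : (1 + c).PosDef := Matrix.PosDef.add_posSemidef Matrix.PosDef.one hpsd
  have hu : IsUnit (1 + c).det := hpd.det_pos.ne'.isUnit
  set g : Fin n → ℝ := (1 + c)⁻¹ *ᵥ h with hg
  have hgeq : (1 + c) *ᵥ g = h := by
    rw [hg, Matrix.mulVec_mulVec, Matrix.mul_nonsing_inv _ hu, Matrix.one_mulVec]
  have hsum : ∀ i, ∑ q, a q i q = g i := by
    intro i
    have h1 : ∑ q, a q i q = h i - (c *ᵥ g) i := by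
      simp only [ha, Finset.sum_sub_distrib, ← hh i, Matrix.mulVec, dotProduct]
    have h2 := congrFun hgeq i
    simp only [Matrix.add_mulVec, Matrix.one_mulVec, Pi.add_apply] at h2
    rw [h1, ← h2]; ring
  constructor
  · intro i j k
    rw [hsum i, ha i j k]; ring
  · intro a' ha'
    have hs : (1 + c) *ᵥ (fun i => ∑ q, a' q i q) = h := by
      funext i
      have hsum' : ∑ q, b q i q = (∑ q, a' q i q) + ∑ q, c i q * ∑ p, a' p q p := by
        rw [← Finset.sum_add_distrib]
        exact Finset.sum_congr rfl fun q _ => (ha' q i q).symm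
      simp only [Matrix.mulVec, dotProduct, hh i, hsum', Matrix.add_apply,
        Matrix.one_apply, add_mul, Finset.sum_add_distrib, ite_mul, one_mul, zero_mul,
        Finset.sum_ite_eq, Finset.mem_univ, if_true]
    have hseq : (fun i => ∑ q, a' q i q) = g := by
      have := congrArg (fun v => (1 + c)⁻¹ *ᵥ v) hs
      simpa [Matrix.mulVec_mulVec, Matrix.nonsing_inv_mul _ hu, Matrix.one_mulVec, hg]
        using this
    funext i j k
    have := congrFun hseq i
    rw [ha i j k, ← ha' i j k, this]
    ring
end

section
/- Let N = 9 and u_l = (cos(2πl/9), sin(2πl/9)) for l = 1,…,9. Then ∑_{l=1}^9 e^{iα_l} = 0 and ∑_{l=1}^9 e^{3iα_l} = 0 with α_l = 2πl/9; equivalently, ∑_l (u_l·e_1)^3 = ∑_l (u_l·e_2)^3 = ∑_l (u_l·e_1)²(u_l·e_2) = ∑_l (u_l·e_1)(u_l·e_2)² = 0. Consequently all G-linear variations δ_{ijk}V of the associated junction varifold of 9 half-lines vanish identically. -/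
open Complex Finset

lemma aux_geom (w : ℂ) (hw : w ≠ 1) (h9 : w ^ 9 = 1) :
    ∑ l : Fin 9, w ^ ((l : ℕ) + 1) = 0 := by
  have h : ∑ l : Fin 9, w ^ ((l : ℕ) + 1) = w * ∑ i ∈ Finset.range 9, w ^ i := by
    rw [Fin.sum_univ_eq_sum_range (fun l => w ^ (l + 1)), Finset.mul_sum]
    exact Finset.sum_congr rfl fun i _ => by ring
  rw [h, geom_sum_eq hw, h9]
  simp

lemma exp_ne_one_of_frac (a : ℂ) (ha : a ≠ 0) (hd : ∀ n : ℤ, a * (n : ℂ) ≠ 1) :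
    Complex.exp (2 * Real.pi * Complex.I / a) ≠ 1 := by
  intro h
  rw [Complex.exp_eq_one_iff] at h
  obtain ⟨n, hn⟩ := h
  have hπ : (Real.pi : ℂ) ≠ 0 := by exact_mod_cast Real.pi_ne_zero
  have h2 : (2 : ℂ) * Real.pi * Complex.I ≠ 0 :=
    mul_ne_zero (mul_ne_zero two_ne_zero hπ) Complex.I_ne_zero
  apply hd n
  have h' := congrArg (· * a) hn
  rw [div_mul_cancel₀ _ ha] at h'
  have key : (2 * (Real.pi : ℂ) * Complex.I) * (a * n) = (2 * (Real.pi : ℂ) * Complex.I) * 1 := by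
    linear_combination -h'
  exact mul_left_cancel₀ h2 key


/-- For `N = 9` and `u_l = (cos α_l, sin α_l)` with `α_l = 2πl/9`
(`l = 1, …, 9`), one has `∑_l e^{iα_l} = 0` and `∑_l e^{3iα_l} = 0`; equivalently all the
cubic sums `∑ (u_l·e₁)³`, `∑ (u_l·e₂)³`, `∑ (u_l·e₁)²(u_l·e₂)`, `∑ (u_l·e₁)(u_l·e₂)²`
vanish.  Consequently all `G`-linear variations `δ_{ijk} V` of the associated junction
varifold of `9` half-lines (which equal `−∑_l (u_l)_i (u_l)_j (u_l)_k δ₀`) vanish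
identically, i.e. `∑_l (u_l)_i (u_l)_j (u_l)_k = 0` for all `i, j, k`. -/
theorem stmt_14 (α : Fin 9 → ℝ)
    (hα : ∀ l : Fin 9, α l = 2 * Real.pi * ((l : ℕ) + 1) / 9)
    (u : Fin 9 → Fin 2 → ℝ)
    (hu : ∀ l, u l = ![Real.cos (α l), Real.sin (α l)]) :
    (∑ l, Complex.exp ((α l : ℂ) * Complex.I) = 0) ∧
    (∑ l, Complex.exp (3 * (α l : ℂ) * Complex.I) = 0) ∧
    (∑ l, (u l 0) ^ 3 = 0) ∧ (∑ l, (u l 1) ^ 3 = 0) ∧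
    (∑ l, (u l 0) ^ 2 * u l 1 = 0) ∧ (∑ l, u l 0 * (u l 1) ^ 2 = 0) ∧
    (∀ i j k : Fin 2, ∑ l, u l i * u l j * u l k = 0) := by
  set z : ℂ := Complex.exp (2 * Real.pi * Complex.I / 9) with hz
  set w : ℂ := Complex.exp (2 * Real.pi * Complex.I / 3) with hw
  have hz1 : z ≠ 1 := by
    apply exp_ne_one_of_frac _ (by norm_num)
    intro n h
    have : (9 : ℤ) * n = 1 := by exact_mod_cast h
    omega
  have hw1 : w ≠ 1 := by
    apply exp_ne_one_of_frac _ (by norm_num)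
    intro n h
    have : (3 : ℤ) * n = 1 := by exact_mod_cast h
    omega
  have hz9 : z ^ 9 = 1 := by
    rw [hz, ← Complex.exp_nat_mul]
    have : (9 : ℕ) * (2 * (Real.pi : ℂ) * Complex.I / 9) = 2 * Real.pi * Complex.I := by
      push_cast; ring
    rw [this, Complex.exp_two_pi_mul_I]
  have hw9 : w ^ 9 = 1 := by
    rw [hw, ← Complex.exp_nat_mul]
    have : (9 : ℕ) * (2 * (Real.pi : ℂ) * Complex.I / 3) = (3 : ℤ) * (2 * Real.pi * Complex.I) := by
      push_cast; ring
    rw [this, Complex.exp_int_mul_two_pi_mul_I]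
  have e1 : ∀ l : Fin 9, Complex.exp ((α l : ℂ) * Complex.I) = z ^ ((l : ℕ) + 1) := by
    intro l
    rw [hα l, hz, ← Complex.exp_nat_mul]
    congr 1
    push_cast
    ring
  have e3 : ∀ l : Fin 9, Complex.exp (3 * (α l : ℂ) * Complex.I) = w ^ ((l : ℕ) + 1) := by
    intro l
    rw [hα l, hw, ← Complex.exp_nat_mul]
    congr 1
    push_cast
    ring
  have S1 : ∑ l, Complex.exp ((α l : ℂ) * Complex.I) = 0 := by
    simp only [e1]; exact aux_geom z hz1 hz9
  have S3 : ∑ l, Complex.exp (3 * (α l : ℂ) * Complex.I) = 0 := by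
    simp only [e3]; exact aux_geom w hw1 hw9
  -- real sums
  have C1 : ∑ l, Real.cos (α l) = 0 := by
    have := congrArg Complex.re S1
    simpa [Complex.re_sum, Complex.exp_ofReal_mul_I_re] using this
  have Si1 : ∑ l, Real.sin (α l) = 0 := by
    have := congrArg Complex.im S1
    simpa [Complex.im_sum, Complex.exp_ofReal_mul_I_im] using this
  have e3' : ∀ l : Fin 9, (3 : ℂ) * (α l : ℂ) * Complex.I = ((3 * α l : ℝ) : ℂ) * Complex.I := by
    intro l; push_cast; ring
  have C3 : ∑ l, Real.cos (3 * α l) = 0 := by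
    have h : ∑ l, Real.cos (3 * α l)
        = (∑ l, Complex.exp (3 * (α l : ℂ) * Complex.I)).re := by
      rw [Complex.re_sum]
      refine Finset.sum_congr rfl fun l _ => ?_
      rw [e3' l, Complex.exp_ofReal_mul_I_re]
    rw [h, S3, Complex.zero_re]
  have Si3 : ∑ l, Real.sin (3 * α l) = 0 := by
    have h : ∑ l, Real.sin (3 * α l)
        = (∑ l, Complex.exp (3 * (α l : ℂ) * Complex.I)).im := by
      rw [Complex.im_sum]
      refine Finset.sum_congr rfl fun l _ => ?_
      rw [e3' l, Complex.exp_ofReal_mul_I_im]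
    rw [h, S3, Complex.zero_im]
  have hc3 : ∀ l : Fin 9, Real.cos (α l) ^ 3
      = (Real.cos (3 * α l) + 3 * Real.cos (α l)) / 4 := by
    intro l; rw [Real.cos_three_mul]; ring
  have hs3 : ∀ l : Fin 9, Real.sin (α l) ^ 3
      = (3 * Real.sin (α l) - Real.sin (3 * α l)) / 4 := by
    intro l; rw [Real.sin_three_mul]; ring
  have SC3 : ∑ l, Real.cos (α l) ^ 3 = 0 := by
    simp only [hc3]
    rw [show (fun l => (Real.cos (3 * α l) + 3 * Real.cos (α l)) / 4) = fun l =>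
      Real.cos (3 * α l) / 4 + 3 / 4 * Real.cos (α l) from funext fun l => by ring]
    rw [Finset.sum_add_distrib, ← Finset.sum_div, ← Finset.mul_sum, C3, C1]
    norm_num
  have SS3 : ∑ l, Real.sin (α l) ^ 3 = 0 := by
    simp only [hs3]
    rw [show (fun l => (3 * Real.sin (α l) - Real.sin (3 * α l)) / 4) = fun l =>
      3 / 4 * Real.sin (α l) - Real.sin (3 * α l) / 4 from funext fun l => by ring]
    rw [Finset.sum_sub_distrib, ← Finset.sum_div, ← Finset.mul_sum, Si3, Si1]
    norm_num
  have SCS : ∑ l, Real.cos (α l) ^ 2 * Real.sin (α l) = 0 := by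
    have : ∀ l : Fin 9, Real.cos (α l) ^ 2 * Real.sin (α l)
        = Real.sin (α l) - Real.sin (α l) ^ 3 := by
      intro l
      have h := Real.sin_sq_add_cos_sq (α l)
      linear_combination Real.sin (α l) * h
    simp only [this]
    rw [Finset.sum_sub_distrib, Si1, SS3]
    norm_num
  have SSC : ∑ l, Real.cos (α l) * Real.sin (α l) ^ 2 = 0 := by
    have : ∀ l : Fin 9, Real.cos (α l) * Real.sin (α l) ^ 2
        = Real.cos (α l) - Real.cos (α l) ^ 3 := by
      intro l
      have h := Real.sin_sq_add_cos_sq (α l)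
      linear_combination Real.cos (α l) * h
    simp only [this]
    rw [Finset.sum_sub_distrib, C1, SC3]
    norm_num
  have huu : ∀ (m : Fin 2) (l : Fin 9),
      u l m = if m = 0 then Real.cos (α l) else Real.sin (α l) := by
    intro m l
    fin_cases m <;> simp [hu l]
  have hu0 : ∀ l, u l 0 = Real.cos (α l) := fun l => by simp [huu]
  have hu1 : ∀ l, u l 1 = Real.sin (α l) := fun l => by simp [huu]
  refine ⟨S1, S3, ?_, ?_, ?_, ?_, ?_⟩
  · simp only [hu0]; exact SC3
  · simp only [hu1]; exact SS3
  · simp only [hu0, hu1]; exact SCS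
  · simp only [hu0, hu1]; exact SSC
  · intro i j k
    fin_cases i <;> fin_cases j <;> fin_cases k <;>
      simp only [huu] <;> norm_num <;>
      [ (simpa [pow_succ, pow_zero, mul_comm, mul_assoc, mul_left_comm] using SC3);
        (simpa [mul_comm, mul_assoc, mul_left_comm, sq] using SCS);
        (simpa [mul_comm, mul_assoc, mul_left_comm, sq] using SCS);
        (simpa [mul_comm, mul_assoc, mul_left_comm, sq] using SSC);
        (simpa [mul_comm, mul_assoc, mul_left_comm, sq] using SCS);
        (simpa [mul_comm, mul_assoc, mul_left_comm, sq] using SSC);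
        (simpa [mul_comm, mul_assoc, mul_left_comm, sq] using SSC);
        (simpa [pow_succ, pow_zero, mul_comm, mul_assoc, mul_left_comm] using SS3)]
end
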